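/- Let A be a bounded operator on a complex Hilbert space H and let p ≥ 1 be a real number. Then |1+A|^p + |1−A|^p + |1+A*|^p + |1−A*|^p ≥ 4·Id in the order of self-adjoint operators, where for a bounded operator T, |T| = (T*T)^{1/2} and |T|^p is defined by the continuous functional calculus applied to the positive operator |T|. -/

import Mathlib

set_option maxHeartbeats 1000000
set_option synthInstance.maxHeartbeats 400000


/-- `|T|^p` for a bounded operator `T` on a Hilbert space: `|T| = (T*T)^{1/2}` and `|T|^p` is
defined by the continuous functional calculus applied to the positive operator `|T|`. -/
noncomputable def opAbsPow {H : Type*} [NormedAddCommGroup H] [InnerProductSpace ℂ H]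
    [CompleteSpace H] (T : H →L[ℂ] H) (p : ℝ) : H →L[ℂ] H :=
  cfc (fun t : ℝ => t ^ p) (cfc Real.sqrt (star T * T))

section Aux

variable {H : Type*} [NormedAddCommGroup H] [InnerProductSpace ℂ H] [CompleteSpace H]

/-- If `x ≤ y + ε • 1` for all positive `ε`, then `x ≤ y`. -/
lemma aux_le_of_forall_pos {x y : H →L[ℂ] H}
    (h : ∀ ε : ℝ, 0 < ε → x ≤ y + ε • 1) : x ≤ y := by
  rw [← sub_nonneg]
  have hcl : IsClosed {a : H →L[ℂ] H | 0 ≤ a} := CStarAlgebra.isClosed_nonneg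
  have h0 : Filter.Tendsto (fun n : ℕ => (1 / ((n : ℝ) + 1))) Filter.atTop (nhds 0) :=
    tendsto_one_div_add_atTop_nhds_zero_nat
  have htend : Filter.Tendsto
      (fun n : ℕ => (1 / ((n : ℝ) + 1)) • (1 : H →L[ℂ] H) + (y - x))
      Filter.atTop (nhds (y - x)) := by
    have := (h0.smul_const (1 : H →L[ℂ] H)).add_const (y - x)
    simpa using this
  refine hcl.mem_of_tendsto htend (Filter.Eventually.of_forall fun n => ?_)
  have hle := h (1 / ((n : ℝ) + 1)) (by positivity)
  have := sub_nonneg.mpr hle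
  simp only [Set.mem_setOf_eq]
  convert this using 1
  abel

/-- Nonnegative real scalar multiples of positive operators are positive. -/
lemma aux_rsmul_nonneg {r : ℝ} (hr : 0 ≤ r) {a : H →L[ℂ] H} (ha : 0 ≤ a) : 0 ≤ r • a := by
  have hsa : IsSelfAdjoint a := .of_nonneg ha
  have h1 : r • a = cfc (fun x : ℝ => r * x) a := by
    rw [cfc_const_mul r (fun x : ℝ => x) a, cfc_id' ℝ a]
  rw [h1]
  exact cfc_nonneg fun x hx => mul_nonneg hr (spectrum_nonneg_of_nonneg ha hx)

lemma aux_rsmul_mono {r : ℝ} (hr : 0 ≤ r) {a b : H →L[ℂ] H} (hab : a ≤ b) :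
    r • a ≤ r • b := by
  have := aux_rsmul_nonneg hr (sub_nonneg.mpr hab)
  rw [smul_sub] at this
  exact sub_nonneg.mp this

/-- Square-root monotonicity in the form we need: if `0 ≤ Q`, `0 ≤ B` and `Q² ≤ B²`,
then `Q ≤ B`. -/
lemma aux_le_of_sq_le_sq {Q B : H →L[ℂ] H} (hQ : 0 ≤ Q) (hB : 0 ≤ B)
    (h : Q * Q ≤ B * B) : Q ≤ B := by
  rcases subsingleton_or_nontrivial H with hH | hH
  · haveI : Subsingleton (H →L[ℂ] H) :=
      ⟨fun f g => ContinuousLinearMap.ext fun x => Subsingleton.elim _ _⟩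
    exact le_of_eq (Subsingleton.elim _ _)
  haveI : Nontrivial (H →L[ℂ] H) := by
    obtain ⟨v, hv⟩ := exists_ne (0 : H)
    exact ⟨1, 0, fun hc => hv (by simpa using congrArg (fun f => f v) hc)⟩
  apply aux_le_of_forall_pos
  intro ε hε
  have hQsa : IsSelfAdjoint Q := .of_nonneg hQ
  have hε1_nonneg : (0 : H →L[ℂ] H) ≤ ε • 1 := aux_rsmul_nonneg hε.le zero_le_one
  have hBε_nonneg : (0 : H →L[ℂ] H) ≤ B + ε • 1 := add_nonneg hB hε1_nonneg
  have hε1_unit : IsUnit (ε • (1 : H →L[ℂ] H)) := by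
    have h1 : (ε • (1 : H →L[ℂ] H)) = algebraMap ℝ _ ε := by
      simp [Algebra.algebraMap_eq_smul_one]
    rw [h1]
    exact (isUnit_iff_ne_zero.mpr hε.ne').map (algebraMap ℝ (H →L[ℂ] H))
  have hBεu : IsUnit (B + ε • (1 : H →L[ℂ] H)) :=
    CStarAlgebra.isUnit_of_le (ε • (1 : H →L[ℂ] H)) (le_add_of_nonneg_left hB) ⟨hε1_nonneg, hε1_unit⟩
  obtain ⟨u, hu⟩ := hBεu
  have hu_nonneg : (0 : H →L[ℂ] H) ≤ (u : H →L[ℂ] H) := hu ▸ hBε_nonneg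
  -- Q² ≤ u²
  have hQBε : Q * Q ≤ (u : H →L[ℂ] H) * u := by
    rw [hu]
    refine h.trans ?_
    have hexp : (B + ε • (1 : H →L[ℂ] H)) * (B + ε • 1)
        = B * B + (ε • B + (ε • B + (ε * ε) • (1 : H →L[ℂ] H))) := by
      simp only [add_mul, mul_add, smul_add, smul_mul_assoc, mul_smul_comm, one_mul,
        mul_one, smul_smul]
      abel
    rw [hexp]
    refine le_add_of_nonneg_right ?_
    have hεB := aux_rsmul_nonneg hε.le hB
    exact add_nonneg hεB (add_nonneg hεB (aux_rsmul_nonneg (by positivity) zero_le_one))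
  have hinv_nonneg : (0 : H →L[ℂ] H) ≤ (↑u⁻¹ : H →L[ℂ] H) :=
    CFC.inv_nonneg_of_nonneg u hu_nonneg
  have hinv_sa : IsSelfAdjoint (↑u⁻¹ : H →L[ℂ] H) := .of_nonneg hinv_nonneg
  -- ‖u⁻¹ * Q‖ ≤ 1
  have hQQ_nonneg : (0 : H →L[ℂ] H) ≤ Q * Q := by
    have := star_mul_self_nonneg Q
    rwa [hQsa.star_eq] at this
  have hconj : (↑u⁻¹ : H →L[ℂ] H) * (Q * Q) * ↑u⁻¹ ≤ 1 := by
    have h1 := star_left_conjugate_le_conjugate hQBε (↑u⁻¹ : H →L[ℂ] H)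
    rw [hinv_sa.star_eq] at h1
    refine h1.trans_eq ?_
    have : (↑u⁻¹ : H →L[ℂ] H) * (↑u * ↑u) * ↑u⁻¹
        = ((↑u⁻¹ : H →L[ℂ] H) * ↑u) * (↑u * ↑u⁻¹) := by noncomm_ring
    rw [this, u.inv_mul, u.mul_inv, one_mul]
  have hconj_nonneg : (0 : H →L[ℂ] H) ≤ (↑u⁻¹ : H →L[ℂ] H) * (Q * Q) * ↑u⁻¹ := by
    have := star_left_conjugate_nonneg hQQ_nonneg (↑u⁻¹ : H →L[ℂ] H)
    rwa [hinv_sa.star_eq] at this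
  have hn : ‖(↑u⁻¹ : H →L[ℂ] H) * Q‖ ≤ 1 := by
    have heq : ((↑u⁻¹ : H →L[ℂ] H) * Q) * star ((↑u⁻¹ : H →L[ℂ] H) * Q)
        = (↑u⁻¹ : H →L[ℂ] H) * (Q * Q) * ↑u⁻¹ := by
      rw [star_mul, hinv_sa.star_eq, hQsa.star_eq]
      noncomm_ring
    have h1 : ‖((↑u⁻¹ : H →L[ℂ] H) * Q) * star ((↑u⁻¹ : H →L[ℂ] H) * Q)‖ ≤ 1 := by
      rw [heq]
      exact (CStarAlgebra.norm_le_one_iff_of_nonneg _ hconj_nonneg).mpr hconj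
    rw [CStarRing.norm_self_mul_star] at h1
    nlinarith [norm_nonneg ((↑u⁻¹ : H →L[ℂ] H) * Q)]
  -- conclude via `le_iff_norm_sqrt_mul_sqrt_inv`
  rw [← hu, le_iff_norm_sqrt_mul_sqrt_inv hQ hu_nonneg]
  set w := CFC.sqrt Q with hw_def
  set v := CFC.sqrt (↑u⁻¹ : H →L[ℂ] H) with hv_def
  have hw_nonneg : 0 ≤ w := CFC.sqrt_nonneg _
  have hv_nonneg : 0 ≤ v := CFC.sqrt_nonneg _
  have hww : w * w = Q := CFC.sqrt_mul_sqrt_self Q hQ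
  have hvv : v * v = (↑u⁻¹ : H →L[ℂ] H) := CFC.sqrt_mul_sqrt_self _ hinv_nonneg
  have hm_nonneg : (0 : H →L[ℂ] H) ≤ v * Q * v := by
    have := star_left_conjugate_nonneg hQ v
    rwa [(IsSelfAdjoint.of_nonneg hv_nonneg).star_eq] at this
  have hsq : ‖w * v‖ * ‖w * v‖ = ‖v * Q * v‖ := by
    rw [← CStarRing.norm_star_mul_self]
    congr 1
    rw [star_mul, (IsSelfAdjoint.of_nonneg hv_nonneg).star_eq,
      (IsSelfAdjoint.of_nonneg hw_nonneg).star_eq,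
      show v * w * (w * v) = v * (w * w) * v by noncomm_ring, hww]
  have hnorm_m : ‖v * Q * v‖ ≤ 1 := by
    rcases eq_or_ne ‖v * Q * v‖ 0 with h0 | h0
    · rw [h0]; exact zero_le_one
    · have hmem : ‖v * Q * v‖ ∈ spectrum ℝ (v * Q * v) :=
        CStarAlgebra.norm_mem_spectrum_of_nonneg hm_nonneg
      have hswap := spectrum.nonzero_mul_comm (𝕜 := ℝ) (v * Q) v
      have hmem1 : ‖v * Q * v‖ ∈ spectrum ℝ ((v * Q) * v) \ {0} := ⟨hmem, h0⟩
      rw [hswap] at hmem1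
      have hmem2 : ‖v * Q * v‖ ∈ spectrum ℝ ((↑u⁻¹ : H →L[ℂ] H) * Q) := by
        have : v * (v * Q) = (↑u⁻¹ : H →L[ℂ] H) * Q := by rw [← mul_assoc, hvv]
        rw [this] at hmem1
        exact hmem1.1
      have hle := spectrum.norm_le_norm_of_mem hmem2
      rw [Real.norm_of_nonneg (norm_nonneg _)] at hle
      exact hle.trans hn
  nlinarith [norm_nonneg (w * v)]

lemma aux_abs_nonneg (T : H →L[ℂ] H) : 0 ≤ cfc Real.sqrt (star T * T) :=
  cfc_nonneg fun x _ => Real.sqrt_nonneg x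

lemma aux_abs_mul_self (T : H →L[ℂ] H) :
    cfc Real.sqrt (star T * T) * cfc Real.sqrt (star T * T) = star T * T := by
  have ha_nonneg : 0 ≤ star T * T := star_mul_self_nonneg T
  have ha_sa : IsSelfAdjoint (star T * T) := .of_nonneg ha_nonneg
  rw [← cfc_mul Real.sqrt Real.sqrt (star T * T)
    Real.continuous_sqrt.continuousOn Real.continuous_sqrt.continuousOn]
  have h1 : cfc (fun x : ℝ => Real.sqrt x * Real.sqrt x) (star T * T)
      = cfc (fun x : ℝ => x) (star T * T) :=
    cfc_congr fun x hx =>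
      Real.mul_self_sqrt (spectrum_nonneg_of_nonneg ha_nonneg hx)
  rw [h1, cfc_id' ℝ (star T * T)]

/-- The key operator inequality `T + T* ≤ |T| + |T*|`. -/
lemma aux_add_star_le_abs (T : H →L[ℂ] H) :
    T + star T ≤ cfc Real.sqrt (star T * T) + cfc Real.sqrt (T * star T) := by
  apply aux_le_of_forall_pos
  intro ε hε
  have ha_nonneg : 0 ≤ star T * T := star_mul_self_nonneg T
  have ha_sa : IsSelfAdjoint (star T * T) := .of_nonneg ha_nonneg
  set a := star T * T with ha_def
  set S := cfc Real.sqrt a with hS_def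
  have hS_nonneg : 0 ≤ S := aux_abs_nonneg T
  have hS_sa : IsSelfAdjoint S := .of_nonneg hS_nonneg
  have hspec : ∀ x ∈ spectrum ℝ a, 0 ≤ x :=
    fun x hx => spectrum_nonneg_of_nonneg ha_nonneg hx
  have hcont1 : ContinuousOn (fun t : ℝ => Real.sqrt t + ε) (spectrum ℝ a) :=
    (Real.continuous_sqrt.add continuous_const).continuousOn
  have hpos : ∀ x ∈ spectrum ℝ a, 0 < Real.sqrt x + ε :=
    fun x hx => by nlinarith [Real.sqrt_nonneg x]
  have hne : ∀ x ∈ spectrum ℝ a, Real.sqrt x + ε ≠ 0 := fun x hx => (hpos x hx).ne'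
  have hY_cont : ContinuousOn (fun t : ℝ => (Real.sqrt t + ε)⁻¹) (spectrum ℝ a) :=
    hcont1.inv₀ hne
  set Y := cfc (fun t : ℝ => (Real.sqrt t + ε)⁻¹) a with hY_def
  have hY_nonneg : 0 ≤ Y :=
    cfc_nonneg fun x hx => inv_nonneg.mpr (hpos x hx).le
  have hY_sa : IsSelfAdjoint Y := .of_nonneg hY_nonneg
  have hSε : S + ε • (1 : H →L[ℂ] H) = cfc (fun t : ℝ => Real.sqrt t + ε) a := by
    rw [cfc_add a Real.sqrt (fun _ => ε) Real.continuous_sqrt.continuousOn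
      continuousOn_const, cfc_const ε a, Algebra.algebraMap_eq_smul_one]
  have hYSε : Y * (S + ε • (1 : H →L[ℂ] H)) = 1 := by
    rw [hSε, hY_def, ← cfc_mul _ _ a hY_cont hcont1]
    have h1 : cfc (fun x : ℝ => (Real.sqrt x + ε)⁻¹ * (Real.sqrt x + ε)) a
        = cfc (fun _ : ℝ => (1 : ℝ)) a :=
      cfc_congr fun x hx => inv_mul_cancel₀ (hne x hx)
    rw [h1, cfc_const 1 a, map_one]
  set Sε := S + ε • (1 : H →L[ℂ] H) with hSε_def
  have hSε_nonneg : 0 ≤ Sε := add_nonneg hS_nonneg (aux_rsmul_nonneg hε.le zero_le_one)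
  have hSε_sa : IsSelfAdjoint Sε := .of_nonneg hSε_nonneg
  have hX : (T * Y) * Sε = T := by rw [mul_assoc, hYSε, mul_one]
  have hstar : Sε * star (T * Y) = star T := by
    have h1 := congrArg star hX
    rwa [star_mul, hSε_sa.star_eq] at h1
  have h0 : 0 ≤ (T * Y - 1) * Sε * star (T * Y - 1) := star_right_conjugate_nonneg hSε_nonneg _
  have hTstarX : T * star (T * Y) = T * Y * star T := by
    rw [star_mul, hY_sa.star_eq, ← mul_assoc]
  have hexp : (T * Y - 1) * Sε * star (T * Y - 1)
      = T * Y * star T - T - star T + Sε := by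
    rw [star_sub, star_one, mul_sub, sub_mul, sub_mul, one_mul, mul_one,
      mul_assoc (T * Y) Sε, hstar, hX]
    abel
  have hmain1 : T + star T ≤ T * Y * star T + Sε := by
    rw [hexp] at h0
    have h1 : 0 ≤ (T * Y * star T + Sε) - (T + star T) := by
      convert h0 using 1; abel
    exact sub_nonneg.mp h1
  -- bound `Q := T * Y * star T` by `|T*|`
  set b := T * star T with hb_def
  have hb_nonneg : 0 ≤ b := mul_star_self_nonneg T
  set R := cfc Real.sqrt b with hR_def
  have hQ_nonneg : 0 ≤ T * Y * star T := star_right_conjugate_nonneg hY_nonneg T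
  have hYa : Y * a = cfc (fun t : ℝ => (Real.sqrt t + ε)⁻¹ * t) a := by
    have h1 := cfc_mul (fun t : ℝ => (Real.sqrt t + ε)⁻¹) (fun t : ℝ => t) a
      hY_cont continuousOn_id
    rw [cfc_id' ℝ a] at h1
    exact h1.symm
  have hYaY : Y * a * Y
      = cfc (fun t : ℝ => ((Real.sqrt t + ε)⁻¹ * t) * (Real.sqrt t + ε)⁻¹) a := by
    rw [hYa]
    exact (cfc_mul (fun t : ℝ => (Real.sqrt t + ε)⁻¹ * t)
      (fun t : ℝ => (Real.sqrt t + ε)⁻¹) a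
      (hY_cont.mul continuousOn_id) hY_cont).symm
  have hYaY_le_one : Y * a * Y ≤ 1 := by
    rw [hYaY]
    have h1 : cfc (fun t : ℝ => ((Real.sqrt t + ε)⁻¹ * t) * (Real.sqrt t + ε)⁻¹) a
        ≤ cfc (fun _ : ℝ => (1 : ℝ)) a := by
      refine cfc_mono (fun x hx => ?_)
        ((hY_cont.mul continuousOn_id).mul hY_cont) continuousOn_const
      have hx0 := hspec x hx
      have hp := hpos x hx
      have hsq : Real.sqrt x * Real.sqrt x = x := Real.mul_self_sqrt hx0
      have heq : ((Real.sqrt x + ε)⁻¹ * x) * (Real.sqrt x + ε)⁻¹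
          = x / ((Real.sqrt x + ε) * (Real.sqrt x + ε)) := by
        field_simp
      rw [heq, div_le_one (by positivity)]
      nlinarith [Real.sqrt_nonneg x]
    refine h1.trans_eq ?_
    rw [cfc_const 1 a, map_one]
  have hQQ : (T * Y * star T) * (T * Y * star T) ≤ b := by
    have h1 : (T * Y * star T) * (T * Y * star T) = T * (Y * a * Y) * star T := by
      rw [ha_def]; noncomm_ring
    rw [h1, hb_def]
    calc T * (Y * a * Y) * star T ≤ T * 1 * star T :=
          star_right_conjugate_le_conjugate hYaY_le_one T
      _ = T * star T := by rw [mul_one]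
  have hRR : R * R = b := by
    have h1 := aux_abs_mul_self (star T)
    rwa [star_star] at h1
  have hR_nonneg : 0 ≤ R := by
    have h1 := aux_abs_nonneg (star T)
    rwa [star_star] at h1
  have hQleR : T * Y * star T ≤ R :=
    aux_le_of_sq_le_sq hQ_nonneg hR_nonneg (by rw [hRR]; exact hQQ)
  calc T + star T ≤ T * Y * star T + Sε := hmain1
    _ ≤ R + Sε := add_le_add_left hQleR _
    _ = S + R + ε • 1 := by rw [hSε_def]; abel

/-- Tangent-line bound: `p • |T| - (p-1) • 1 ≤ |T|^p`. -/
lemma aux_tangent {S : H →L[ℂ] H} (hS : 0 ≤ S) {p : ℝ} (hp : 1 ≤ p) :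
    p • S - (p - 1) • (1 : H →L[ℂ] H) ≤ cfc (fun t : ℝ => t ^ p) S := by
  have hS_sa : IsSelfAdjoint S := .of_nonneg hS
  have hcont : ContinuousOn (fun t : ℝ => t ^ p) (spectrum ℝ S) := fun x _ =>
    (Real.continuousAt_rpow_const x p (Or.inr (by linarith))).continuousWithinAt
  have h1 : p • S - (p - 1) • (1 : H →L[ℂ] H)
      = cfc (fun t : ℝ => p * t - (p - 1)) S := by
    rw [cfc_sub (fun t : ℝ => p * t) (fun _ : ℝ => p - 1) S
      (by fun_prop) continuousOn_const,
      cfc_const_mul p (fun t : ℝ => t) S, cfc_id' ℝ S, cfc_const (p - 1) S,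
      Algebra.algebraMap_eq_smul_one]
  rw [h1]
  apply cfc_mono (hg := hcont)
  intro x hx
  have hx0 : 0 ≤ x := spectrum_nonneg_of_nonneg hS hx
  have h2 := one_add_mul_self_le_rpow_one_add (by linarith : (-1 : ℝ) ≤ x - 1) hp
  rw [show (1 : ℝ) + (x - 1) = x by ring] at h2
  linarith

end Aux

/-- For every bounded operator `A` on a complex Hilbert space and every real `p ≥ 1`,
`|1+A|^p + |1−A|^p + |1+A*|^p + |1−A*|^p ≥ 4` in the Loewner order. -/
theorem four_le_sum_abs_pow
    {H : Type*} [NormedAddCommGroup H] [InnerProductSpace ℂ H] [CompleteSpace H]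
    (A : H →L[ℂ] H) (p : ℝ) (hp : 1 ≤ p) :
    4 • (1 : H →L[ℂ] H) ≤
      opAbsPow (1 + A) p + opAbsPow (1 - A) p +
        opAbsPow (1 + star A) p + opAbsPow (1 - star A) p := by
  have hp0 : (0 : ℝ) ≤ p := by linarith
  set S₁ := cfc Real.sqrt (star (1 + A) * (1 + A)) with hS₁
  set S₂ := cfc Real.sqrt (star (1 - A) * (1 - A)) with hS₂
  set S₃ := cfc Real.sqrt (star (1 + star A) * (1 + star A)) with hS₃
  set S₄ := cfc Real.sqrt (star (1 - star A) * (1 - star A)) with hS₄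
  -- tangent bounds
  have t₁ : p • S₁ - (p - 1) • (1 : H →L[ℂ] H) ≤ opAbsPow (1 + A) p :=
    aux_tangent (aux_abs_nonneg _) hp
  have t₂ : p • S₂ - (p - 1) • (1 : H →L[ℂ] H) ≤ opAbsPow (1 - A) p :=
    aux_tangent (aux_abs_nonneg _) hp
  have t₃ : p • S₃ - (p - 1) • (1 : H →L[ℂ] H) ≤ opAbsPow (1 + star A) p :=
    aux_tangent (aux_abs_nonneg _) hp
  have t₄ : p • S₄ - (p - 1) • (1 : H →L[ℂ] H) ≤ opAbsPow (1 - star A) p :=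
    aux_tangent (aux_abs_nonneg _) hp
  -- key inequalities
  have k₁ : (1 + A) + star (1 + A) ≤ S₁ + S₃ := by
    have h1 := aux_add_star_le_abs (1 + A)
    have h2 : (1 + A) * star (1 + A) = star (1 + star A) * (1 + star A) := by
      simp [star_add, star_one, star_star, mul_comm]
    rwa [h2] at h1
  have k₂ : (1 - A) + star (1 - A) ≤ S₂ + S₄ := by
    have h1 := aux_add_star_le_abs (1 - A)
    have h2 : (1 - A) * star (1 - A) = star (1 - star A) * (1 - star A) := by
      simp [star_sub, star_one, star_star, mul_comm]
    rwa [h2] at h1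
  have ksum : 4 • (1 : H →L[ℂ] H) ≤ S₁ + S₂ + S₃ + S₄ := by
    have h1 : 4 • (1 : H →L[ℂ] H)
        = ((1 + A) + star (1 + A)) + ((1 - A) + star (1 - A)) := by
      simp only [star_add, star_sub, star_one]
      abel
    rw [h1]
    calc ((1 + A) + star (1 + A)) + ((1 - A) + star (1 - A))
        ≤ (S₁ + S₃) + (S₂ + S₄) := add_le_add k₁ k₂
      _ = S₁ + S₂ + S₃ + S₄ := by abel
  -- assemble
  have hsum : p • (S₁ + S₂ + S₃ + S₄) - (4 * (p - 1)) • (1 : H →L[ℂ] H)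
      ≤ opAbsPow (1 + A) p + opAbsPow (1 - A) p +
        opAbsPow (1 + star A) p + opAbsPow (1 - star A) p := by
    have h1 := add_le_add (add_le_add (add_le_add t₁ t₂) t₃) t₄
    refine le_trans (le_of_eq ?_) h1
    simp only [smul_add]
    rw [show (4 * (p - 1)) • (1 : H →L[ℂ] H)
      = (p-1) • (1 : H →L[ℂ] H) + (p-1) • (1 : H →L[ℂ] H)
        + (p-1) • (1 : H →L[ℂ] H) + (p-1) • (1 : H →L[ℂ] H) by
        rw [← add_smul, ← add_smul, ← add_smul]; ring_nf]
    abel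
  have h2 : p • (4 • (1 : H →L[ℂ] H)) ≤ p • (S₁ + S₂ + S₃ + S₄) :=
    aux_rsmul_mono hp0 ksum
  have h3 : 4 • (1 : H →L[ℂ] H)
      = p • (4 • (1 : H →L[ℂ] H)) - (4 * (p - 1)) • (1 : H →L[ℂ] H) := by
    rw [← Nat.cast_smul_eq_nsmul ℝ 4 (1 : H →L[ℂ] H), smul_smul, ← sub_smul]
    congr 1
    push_cast
    ring
  rw [h3]
  refine le_trans ?_ hsum
  exact sub_le_sub_right h2 _
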